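/- Let A be a random variable on a finite set 𝒜 and V a random variable on a finite set 𝒱, and let d be the Hamming (Kronecker delta) distortion on 𝒜. For any function Â : 𝒱 → 𝒜, if H(A|V) = h₂(α) for some α ∈ [0,1/2] with |𝒜| = 2, then P(Â(V) ≠ A) ≥ α. -/

import Mathlib

open Finset

/-- The binary entropy function (in bits), with the convention `0 log 0 = 0`. -/
noncomputable def binEnt (x : ℝ) : ℝ :=
  -x * Real.logb 2 x - (1 - x) * Real.logb 2 (1 - x)

/-- Shannon entropy (in bits) of a finitely supported distribution. -/
noncomputable def entD {α : Type*} [Fintype α] (q : α → ℝ) : ℝ :=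
  -∑ x, q x * Real.logb 2 (q x)

/-- Probability that a random variable `X` on a finite weighted space `(Ω, μ)` equals `x`. -/
noncomputable def pr {Ω α : Type*} [Fintype Ω] [DecidableEq α] (μ : Ω → ℝ) (X : Ω → α)
    (x : α) : ℝ :=
  ∑ ω ∈ Finset.univ.filter (fun ω => X ω = x), μ ω

/-- Entropy of a random variable. -/
noncomputable def entRV {Ω α : Type*} [Fintype Ω] [Fintype α] [DecidableEq α] (μ : Ω → ℝ)
    (X : Ω → α) : ℝ :=
  entD (pr μ X)

/-- Conditional entropy `H(X|Y)`. -/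
noncomputable def condEnt {Ω α β : Type*} [Fintype Ω] [Fintype α] [Fintype β]
    [DecidableEq α] [DecidableEq β] (μ : Ω → ℝ) (X : Ω → α) (Y : Ω → β) : ℝ :=
  entRV μ (fun ω => (X ω, Y ω)) - entRV μ Y


lemma binEnt_eq (x : ℝ) : binEnt x = Real.binEntropy x / Real.log 2 := by
  simp [binEnt, Real.binEntropy, Real.logb, Real.log_inv]
  ring

lemma concave_binEnt : ConcaveOn ℝ (Set.Icc 0 1) binEnt := by
  have h := Real.strictConcave_binEntropy.concaveOn.smul
    (c := (Real.log 2)⁻¹) (by positivity)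
  have e : binEnt = fun x => (Real.log 2)⁻¹ • Real.binEntropy x := by
    ext x
    simp [binEnt_eq, div_eq_inv_mul]
  rw [e]
  exact h

lemma binEnt_mono {x y : ℝ} (hx : x ∈ Set.Icc (0:ℝ) (1/2)) (hy : y ∈ Set.Icc (0:ℝ) (1/2))
    (h : binEnt x ≤ binEnt y) : x ≤ y := by
  by_contra hlt
  push_neg at hlt
  have h2 := Real.binEntropy_strictMonoOn (by simpa [Set.mem_Icc] using hy)
    (by simpa [Set.mem_Icc] using hx) hlt
  rw [binEnt_eq, binEnt_eq,
    div_le_div_iff₀ (Real.log_pos one_lt_two) (Real.log_pos one_lt_two)] at h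
  nlinarith [Real.log_pos one_lt_two]

lemma bool_xor_true {a b : Bool} : (xor a b = true) ↔ ¬ (a = b) := by
  cases a <;> cases b <;> decide

lemma bool_xor_eq {a b e : Bool} : (xor a b = e) ↔ (b = xor a e) := by
  cases a <;> cases b <;> cases e <;> decide

/-- Per-fiber identity: `q log q - r log r - (q-r) log (q-r) = q * h₂(r/q)`. -/
lemma fiber_binEnt {q r : ℝ} (hr0 : 0 ≤ r) (hrq : r ≤ q) :
    q * Real.logb 2 q - (r * Real.logb 2 r + (q - r) * Real.logb 2 (q - r))
      = q * binEnt (r / q) := by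
  rcases eq_or_lt_of_le (hr0.trans hrq) with hq | hq
  · have hq0 : q = 0 := hq.symm
    have hr : r = 0 := le_antisymm (hq0 ▸ hrq) hr0
    simp [hq0, hr]
  rcases eq_or_lt_of_le hr0 with hr | hr
  · subst hr
    simp [binEnt]
  rcases eq_or_lt_of_le hrq with hrq' | hrq'
  · subst hrq'
    simp [binEnt, div_self hq.ne']
  have hq0 : q ≠ 0 := hq.ne'
  have hqr : (0:ℝ) < q - r := by linarith
  have h1 : (1 : ℝ) - r / q = (q - r) / q := by field_simp
  rw [binEnt, h1, Real.logb_div hr.ne' hq0, Real.logb_div hqr.ne' hq0]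
  field_simp
  ring

lemma jensen_binEnt {ι : Type*} [Fintype ι] (q r : ι → ℝ)
    (hq0 : ∀ v, 0 ≤ q v) (hr0 : ∀ v, 0 ≤ r v) (hrq : ∀ v, r v ≤ q v)
    (hq1 : ∑ v, q v = 1) :
    ∑ v, q v * binEnt (r v / q v) ≤ binEnt (∑ v, r v) := by
  have hmem : ∀ v ∈ Finset.univ (α := ι), r v / q v ∈ Set.Icc (0:ℝ) 1 := by
    intro v _
    rcases eq_or_lt_of_le (hq0 v) with h | h
    · simp [← h, div_zero]  -- q v = 0 → r v / 0 = 0 ... careful h : 0 = q v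
    · exact ⟨div_nonneg (hr0 v) (hq0 v), (div_le_one h).mpr (hrq v)⟩
  have key := concave_binEnt.le_map_sum (t := Finset.univ) (w := q)
    (p := fun v => r v / q v) (fun v _ => hq0 v) hq1 hmem
  have hsum : ∑ v, q v • (r v / q v) = ∑ v, r v := by
    apply Finset.sum_congr rfl
    intro v _
    rcases eq_or_lt_of_le (hq0 v) with h | h
    · have : r v = 0 := le_antisymm (h ▸ hrq v) (hr0 v)
      simp [← h, this]
    · simp [smul_eq_mul, mul_div_cancel₀ _ h.ne']
  rw [hsum] at key
  simpa using key

/-- Fano-type bound for a binary source: if `H(A|V) = h₂(α)` with `α ∈ [0,1/2]`, then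
any estimator `Â(V)` of `A` has error probability at least `α`. -/
theorem fano_binary_error_bound
    {Ω 𝒱 : Type*} [Fintype Ω] [Fintype 𝒱] [DecidableEq 𝒱]
    (μ : Ω → ℝ) (hμ0 : ∀ ω, 0 ≤ μ ω) (hμ1 : ∑ ω, μ ω = 1)
    (A : Ω → Bool) (V : Ω → 𝒱) (Ahat : 𝒱 → Bool)
    (α : ℝ) (hα : α ∈ Set.Icc (0:ℝ) (1/2))
    (hH : condEnt μ A V = binEnt α) :
    α ≤ ∑ ω ∈ Finset.univ.filter (fun ω => Ahat (V ω) ≠ A ω), μ ω := by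
  classical
  set E : Ω → Bool := fun ω => xor (Ahat (V ω)) (A ω) with hE
  set q : 𝒱 → ℝ := pr μ V with hq
  set r : 𝒱 → ℝ := fun v => pr μ (fun ω => (E ω, V ω)) (true, v) with hr
  -- basic positivity
  have hq0 : ∀ v, 0 ≤ q v := fun v => Finset.sum_nonneg fun ω _ => hμ0 ω
  have hr0 : ∀ v, 0 ≤ r v := fun v => Finset.sum_nonneg fun ω _ => hμ0 ω
  -- fiber splitting
  have hfilterT : ∀ v : 𝒱, Finset.univ.filter (fun ω => (E ω, V ω) = (true, v))
      = (Finset.univ.filter (fun ω => V ω = v)).filter (fun ω => E ω = true) := by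
    intro v
    rw [Finset.filter_filter]
    apply Finset.filter_congr
    intro ω _
    simp [Prod.ext_iff, and_comm]
  have hfilterF : ∀ v : 𝒱, Finset.univ.filter (fun ω => (E ω, V ω) = (false, v))
      = (Finset.univ.filter (fun ω => V ω = v)).filter (fun ω => ¬ (E ω = true)) := by
    intro v
    rw [Finset.filter_filter]
    apply Finset.filter_congr
    intro ω _
    simp [Prod.ext_iff, and_comm]
  have hsplit : ∀ v, pr μ (fun ω => (E ω, V ω)) (false, v) = q v - r v := by
    intro v
    have := Finset.sum_filter_add_sum_filter_not
      (Finset.univ.filter (fun ω => V ω = v)) (fun ω => E ω = true) μ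
    simp only [hr, hq, pr]
    rw [hfilterT v, hfilterF v]
    linarith
  have hrq : ∀ v, r v ≤ q v := by
    intro v
    have h := hsplit v
    have h2 : 0 ≤ pr μ (fun ω => (E ω, V ω)) (false, v) :=
      Finset.sum_nonneg fun ω _ => hμ0 ω
    linarith
  have hq1 : ∑ v, q v = 1 := by
    simp only [hq, pr]
    rw [Finset.sum_fiberwise Finset.univ V μ, hμ1]
  -- error probability
  have hP : ∑ v, r v = ∑ ω ∈ Finset.univ.filter (fun ω => Ahat (V ω) ≠ A ω), μ ω := by
    simp only [hr, pr]
    calc ∑ v, ∑ ω ∈ Finset.univ.filter (fun ω => (E ω, V ω) = (true, v)), μ ω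
        = ∑ v, ∑ ω ∈ (Finset.univ.filter (fun ω => E ω = true)).filter
            (fun ω => V ω = v), μ ω := by
          refine Finset.sum_congr rfl fun v _ => ?_
          rw [hfilterT v, Finset.filter_filter, Finset.filter_filter]
          congr 1
          apply Finset.filter_congr
          intro ω _
          exact and_comm
      _ = ∑ ω ∈ Finset.univ.filter (fun ω => E ω = true), μ ω :=
          Finset.sum_fiberwise _ V μ
      _ = ∑ ω ∈ Finset.univ.filter (fun ω => Ahat (V ω) ≠ A ω), μ ω := by
          congr 1
          apply Finset.filter_congr
          intro ω _
          exact bool_xor_true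
  -- H(A|V) = H(E|V)
  have hEA : entRV μ (fun ω => (E ω, V ω)) = entRV μ (fun ω => (A ω, V ω)) := by
    have hφ : Function.Involutive
        (fun p : Bool × 𝒱 => (xor (Ahat p.2) p.1, p.2)) := by
      rintro ⟨e, v⟩
      simp only
      congr 1
      cases Ahat v <;> cases e <;> rfl
    have hpr : ∀ p : Bool × 𝒱, pr μ (fun ω => (E ω, V ω)) p
        = pr μ (fun ω => (A ω, V ω)) (xor (Ahat p.2) p.1, p.2) := by
      rintro ⟨e, v⟩
      unfold pr
      congr 1
      apply Finset.filter_congr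
      intro ω _
      simp only [Prod.ext_iff]
      rcases eq_or_ne (V ω) v with h | h
      · subst h
        have hx : (E ω = e) ↔ (A ω = xor (Ahat (V ω)) e) := bool_xor_eq
        tauto
      · simp [h]
    unfold entRV entD
    congr 1
    rw [← Equiv.sum_comp (Function.Involutive.toPerm _ hφ)
      (fun p => pr μ (fun ω => (A ω, V ω)) p
        * Real.logb 2 (pr μ (fun ω => (A ω, V ω)) p))]
    apply Finset.sum_congr rfl
    intro p _
    rw [hpr p]
    rfl
  -- conditional entropy formula
  have hcond : condEnt μ A V = ∑ v, q v * binEnt (r v / q v) := by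
    unfold condEnt
    rw [← hEA]
    unfold entRV entD
    rw [Fintype.sum_prod_type, Fintype.sum_bool]
    have : ∀ v, pr μ (fun ω => (E ω, V ω)) (false, v)
        * Real.logb 2 (pr μ (fun ω => (E ω, V ω)) (false, v))
        = (q v - r v) * Real.logb 2 (q v - r v) := by
      intro v; rw [hsplit v]
    rw [Finset.sum_congr rfl fun v _ => this v]
    have hPr : pr μ V = q := rfl
    rw [hPr]
    rw [← Finset.sum_congr rfl fun v (_ : v ∈ Finset.univ) => fiber_binEnt (hr0 v) (hrq v)]
    rw [Finset.sum_sub_distrib, Finset.sum_add_distrib]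
    ring
  -- put it together
  have hchain : binEnt α ≤ binEnt (∑ v, r v) := by
    rw [← hH, hcond]
    exact jensen_binEnt q r hq0 hr0 hrq hq1
  rw [← hP]
  have hP0 : 0 ≤ ∑ v, r v := Finset.sum_nonneg fun v _ => hr0 v
  rcases le_or_gt (∑ v, r v) (1/2) with hhalf | hhalf
  · exact binEnt_mono hα ⟨hP0, hhalf⟩ hchain
  · linarith [hα.2]
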